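/- Let A and B be finite index types. Let H be a real symmetric matrix indexed by A all of whose entries are ≤ 0, let σ be a real symmetric positive semidefinite matrix indexed by A × B, and let ρ be a real matrix indexed by A such that (Tr_B σ)_{s,t} ≥ ρ_{s,t} for all s, t ∈ A (entrywise inequality). Then Tr(H ρ) ≥ Tr((H ⊗ I_B) σ). -/
import Mathlib


open Matrix
open scoped Kronecker

/-- The partial trace over the second tensor factor:
(Tr_B σ)_{s,t} = ∑_{k ∈ B} σ_{(s,k),(t,k)}. -/
def partialTraceB {A B : Type*} [Fintype B] (σ : Matrix (A × B) (A × B) ℝ) :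
    Matrix A A ℝ :=
  fun s t => ∑ k : B, σ (s, k) (t, k)

/-- if H is real symmetric with all entries ≤ 0, σ is real symmetric PSD
on A × B, and Tr_B(σ) ≥ ρ entrywise, then Tr(Hρ) ≥ Tr((H ⊗ I_B)σ). -/
theorem trace_mul_ge_of_entrywise_dominated (A B : Type*)
    [Fintype A] [Fintype B] [DecidableEq B]
    (H : Matrix A A ℝ) (hHsymm : H.IsHermitian) (hHle : ∀ s t, H s t ≤ 0)
    (σ : Matrix (A × B) (A × B) ℝ) (hσ : σ.PosSemidef)
    (ρ : Matrix A A ℝ) (hρ : ∀ s t, ρ s t ≤ partialTraceB σ s t) :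
    (H * ρ).trace ≥ ((H ⊗ₖ (1 : Matrix B B ℝ)) * σ).trace := by
  have hL : ((H ⊗ₖ (1 : Matrix B B ℝ)) * σ).trace
      = ∑ s : A, ∑ t : A, H s t * partialTraceB σ t s := by
    simp only [Matrix.trace, Matrix.diag, Matrix.mul_apply, partialTraceB,
      Matrix.kroneckerMap_apply, Matrix.one_apply, Fintype.sum_prod_type,
      ite_mul, one_mul, zero_mul, mul_ite, mul_zero, Finset.sum_ite_eq,
      Finset.mem_univ, if_true, Finset.mul_sum]
    simp only [mul_one]
    exact Finset.sum_congr rfl fun s _ => Finset.sum_comm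
  have hR : (H * ρ).trace = ∑ s : A, ∑ t : A, H s t * ρ t s := by
    simp [Matrix.trace, Matrix.diag, Matrix.mul_apply]
  rw [hL, hR]
  refine Finset.sum_le_sum fun s _ => Finset.sum_le_sum fun t _ => ?_
  exact mul_le_mul_of_nonpos_left (hρ t s) (hHle s t)
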